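/- arXiv:1812.07400 — 2 statements merged into one kernel-verified Lean document; each statement's English description precedes it below -/
import Mathlib

section
/- Let β > 0 and 0 ≤ h < (1/2)·ln(2+√3). Then the function Γ_{β,h} is strictly concave on the open interval (0, +∞). -/
private theorem key_ineq (su cu sv cv : ℝ) (h1 : cu^2 = su^2+1) (h2 : cv^2 = sv^2+1)
    (h3 : 0 < cu) (h4 : 0 < cv) (h5 : 0 < su + sv) (h6 : cu*cv - su*sv < 2) :
    0 < su*cv^3 + sv*cu^3 := by
  have hcc : 0 < cu*cv := mul_pos h3 h4
  have hc0 : 0 < cu*cv - su*sv := by nlinarith [sq_nonneg (su*sv), sq_nonneg su, sq_nonneg sv]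
  have hc2 : (cu*cv - su*sv)^2 = (su*cv - sv*cu)^2 + 1 := by nlinarith [h1, h2]
  have hC2 : (cu*cv + su*sv)^2 = (su*cv + sv*cu)^2 + 1 := by nlinarith [h1, h2]
  have hc1 : 1 ≤ cu*cv - su*sv := by nlinarith [sq_nonneg (su*cv - sv*cu)]
  have hC0 : 0 < cu*cv + su*sv := by nlinarith [sq_nonneg su, sq_nonneg sv]
  have hC1 : 1 ≤ cu*cv + su*sv := by nlinarith [sq_nonneg (su*cv + sv*cu)]
  have hP : 0 < su*cv + sv*cu := by
    have h7 : 0 < cu + cv := by linarith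
    have h8 : (su*cv + sv*cu) * (cu + cv) = (su+sv) * (cu*cv + su*sv + 1) := by
      linear_combination sv*h1 + su*h2
    have h9 : 0 < (su+sv) * (cu*cv + su*sv + 1) := mul_pos h5 (by linarith)
    nlinarith [h8, h9, h7]
  have hid : su*cv^3 + sv*cu^3 = (su*cv + sv*cu) * (1 + su*sv*(cu*cv - su*sv)) := by
    linear_combination (sv*cu - su*sv^2*cv)*h1 + (su*cv - su^2*sv*cu)*h2
  rw [hid]
  apply mul_pos hP
  rcases le_or_gt 0 (su*sv) with hs | hs
  · nlinarith
  · nlinarith [mul_pos (show (0:ℝ) < 2 - (cu*cv - su*sv) by linarith)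
      (show (0:ℝ) < 1 + (cu*cv - su*sv) by linarith)]

private theorem tanh_hasDerivAt (x : ℝ) :
    HasDerivAt Real.tanh (1 - Real.tanh x ^ 2) x := by
  have hc := (Real.cosh_pos x).ne'
  have h := (Real.hasDerivAt_sinh x).fun_div (Real.hasDerivAt_cosh x) hc
  have heq : Real.tanh = fun y => Real.sinh y / Real.cosh y :=
    funext fun y => Real.tanh_eq_sinh_div_cosh y
  rw [heq]
  refine h.congr_deriv ?_
  have := Real.cosh_sq_sub_sinh_sq x
  field_simp

/-- For `β > 0` and `0 ≤ h < (1/2)ln(2+√3)`, the function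
`Γ_{β,h}(x) = (β/3)(tanh(x+h) + tanh(x−h))` is strictly concave on `(0, ∞)`. -/
theorem gamma_strictConcave_small_disorder (β h : ℝ) (hβ : 0 < β) (hh : 0 ≤ h)
    (hh' : h < 1 / 2 * Real.log (2 + Real.sqrt 3))
    (Γ : ℝ → ℝ)
    (hΓ : ∀ x, Γ x = β / 3 * (Real.tanh (x + h) + Real.tanh (x - h))) :
    StrictConcaveOn ℝ (Set.Ioi (0 : ℝ)) Γ := by
  -- first derivative
  have hd1 : ∀ x : ℝ, HasDerivAt Γ
      (β / 3 * ((1 - Real.tanh (x + h) ^ 2) + (1 - Real.tanh (x - h) ^ 2))) x := by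
    intro x
    have hΓeq : Γ = fun x => β / 3 * (Real.tanh (x + h) + Real.tanh (x - h)) := funext hΓ
    rw [hΓeq]
    have h1 : HasDerivAt (fun x : ℝ => Real.tanh (x + h)) (1 - Real.tanh (x + h) ^ 2) x := by
      have := (tanh_hasDerivAt (x + h)).comp x ((hasDerivAt_id x).add_const h)
      simpa [Function.comp_def] using this
    have h2 : HasDerivAt (fun x : ℝ => Real.tanh (x - h)) (1 - Real.tanh (x - h) ^ 2) x := by
      have := (tanh_hasDerivAt (x - h)).comp x ((hasDerivAt_id x).sub_const h)
      simpa [Function.comp_def] using this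
    exact (h1.add h2).const_mul (β / 3)
  have hderiv : deriv Γ = fun x =>
      β / 3 * ((1 - Real.tanh (x + h) ^ 2) + (1 - Real.tanh (x - h) ^ 2)) :=
    funext fun x => (hd1 x).deriv
  -- second derivative
  have hd2 : ∀ x : ℝ, HasDerivAt (deriv Γ)
      (β / 3 * ((-(2 * Real.tanh (x + h)) * (1 - Real.tanh (x + h) ^ 2)) +
        (-(2 * Real.tanh (x - h)) * (1 - Real.tanh (x - h) ^ 2)))) x := by
    intro x
    rw [hderiv]
    have h1 : HasDerivAt (fun x : ℝ => Real.tanh (x + h)) (1 - Real.tanh (x + h) ^ 2) x := by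
      have := (tanh_hasDerivAt (x + h)).comp x ((hasDerivAt_id x).add_const h)
      simpa [Function.comp_def] using this
    have h2 : HasDerivAt (fun x : ℝ => Real.tanh (x - h)) (1 - Real.tanh (x - h) ^ 2) x := by
      have := (tanh_hasDerivAt (x - h)).comp x ((hasDerivAt_id x).sub_const h)
      simpa [Function.comp_def] using this
    have h1' : HasDerivAt (fun x : ℝ => 1 - Real.tanh (x + h) ^ 2)
        (-(2 * Real.tanh (x + h)) * (1 - Real.tanh (x + h) ^ 2)) x := by
      have := (h1.fun_pow 2).const_sub 1
      refine this.congr_deriv ?_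
      ring
    have h2' : HasDerivAt (fun x : ℝ => 1 - Real.tanh (x - h) ^ 2)
        (-(2 * Real.tanh (x - h)) * (1 - Real.tanh (x - h) ^ 2)) x := by
      have := (h2.fun_pow 2).const_sub 1
      refine this.congr_deriv ?_
      ring
    exact (h1'.add h2').const_mul (β / 3)
  -- cosh (2h) < 2
  have hcosh2h : Real.cosh (2 * h) < 2 := by
    have h2h : 2 * h < Real.log (2 + Real.sqrt 3) := by linarith
    have hs3 : Real.sqrt 3 ^ 2 = 3 := Real.sq_sqrt (by norm_num)
    have hs3pos : 0 < Real.sqrt 3 := Real.sqrt_pos.mpr (by norm_num)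
    have hpos : (0:ℝ) < 2 + Real.sqrt 3 := by linarith
    have hcval : Real.cosh (Real.log (2 + Real.sqrt 3)) = 2 := by
      rw [Real.cosh_eq, Real.exp_log hpos, Real.exp_neg, Real.exp_log hpos]
      rw [show (2 + Real.sqrt 3)⁻¹ = 2 - Real.sqrt 3 by
        field_simp
        linear_combination hs3]
      ring
    calc Real.cosh (2 * h) < Real.cosh (Real.log (2 + Real.sqrt 3)) := by
          rw [Real.cosh_lt_cosh]
          rw [abs_of_nonneg (by linarith), abs_of_nonneg (Real.log_nonneg (by linarith))]
          exact h2h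
      _ = 2 := hcval
  apply strictConcaveOn_of_deriv2_neg (convex_Ioi 0)
  · exact fun x _ => (hd1 x).differentiableAt.continuousAt.continuousWithinAt
  · intro x hx
    rw [interior_Ioi] at hx
    have hx0 : (0:ℝ) < x := hx
    have hiter : deriv^[2] Γ x = deriv (deriv Γ) x := by
      simp [Function.iterate_succ, Function.comp]
    rw [hiter, (hd2 x).deriv]
    -- reduce to key inequality
    set u := x + h with hu
    set v := x - h with hv
    have hcu : 0 < Real.cosh u := Real.cosh_pos u
    have hcv : 0 < Real.cosh v := Real.cosh_pos v
    have h1 : Real.cosh u ^ 2 = Real.sinh u ^ 2 + 1 := Real.cosh_sq u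
    have h2 : Real.cosh v ^ 2 = Real.sinh v ^ 2 + 1 := Real.cosh_sq v
    have h5 : 0 < Real.sinh u + Real.sinh v := by
      have : Real.sinh (-v) < Real.sinh u := by
        rw [Real.sinh_lt_sinh]
        simp only [hu, hv]
        linarith
      rw [Real.sinh_neg] at this
      linarith
    have h6 : Real.cosh u * Real.cosh v - Real.sinh u * Real.sinh v < 2 := by
      have : Real.cosh (u - v) = Real.cosh u * Real.cosh v - Real.sinh u * Real.sinh v :=
        Real.cosh_sub u v
      rw [← this, show u - v = 2 * h by simp only [hu, hv]; ring]
      exact hcosh2h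
    have hkey := key_ineq (Real.sinh u) (Real.cosh u) (Real.sinh v) (Real.cosh v)
      h1 h2 hcu hcv h5 h6
    -- rewrite tanh in terms of sinh/cosh
    have htu : Real.tanh u = Real.sinh u / Real.cosh u := Real.tanh_eq_sinh_div_cosh u
    have htv : Real.tanh v = Real.sinh v / Real.cosh v := Real.tanh_eq_sinh_div_cosh v
    have hexpr : -(2 * Real.tanh u) * (1 - Real.tanh u ^ 2) +
        -(2 * Real.tanh v) * (1 - Real.tanh v ^ 2) =
        -2 * (Real.sinh u * Real.cosh v ^ 3 + Real.sinh v * Real.cosh u ^ 3) /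
          (Real.cosh u ^ 3 * Real.cosh v ^ 3) := by
      rw [htu, htv]
      field_simp
      linear_combination (-(Real.sinh u * Real.cosh v ^ 3)) * h1 + (-(Real.cosh u ^ 3 * Real.sinh v)) * h2
    rw [hexpr]
    apply mul_neg_of_pos_of_neg (by positivity)
    apply div_neg_of_neg_of_pos (by linarith) (by positivity)
end

section
/- Let 0 ≤ h ≤ (1/2)·ln(2+√3) and 0 < β ≤ (3/2)·cosh²(h). Then the origin attracts all trajectories: every differentiable function f: [0, ∞) → ℝ² satisfying f'(t) = V(f(t)) for all t ≥ 0 converges to (0,0) as t → +∞. -/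
open Real Filter Set Topology

set_option maxHeartbeats 4000000


private lemma mvt_le {f f' : ℝ → ℝ} {a b C : ℝ} (hab : a ≤ b)
    (hf : ∀ t ∈ Icc a b, HasDerivAt f (f' t) t)
    (hC : ∀ t ∈ Icc a b, f' t ≤ C) : f b - f a ≤ C * (b - a) := by
  have hmono : MonotoneOn (fun t => t * C - f t) (Icc a b) := by
    apply monotoneOn_of_hasDerivWithinAt_nonneg (f' := fun t => C - f' t) (convex_Icc a b)
    · exact fun t ht => ((hasDerivAt_mul_const C).sub (hf t ht)).continuousAt.continuousWithinAt
    · intro x hx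
      exact (((hasDerivAt_mul_const C).sub (hf x (interior_subset hx)))).hasDerivWithinAt
    · intro x hx
      have := hC x (interior_subset hx)
      linarith
  have := hmono (left_mem_Icc.2 hab) (right_mem_Icc.2 hab) hab
  simp only at this
  linarith

private lemma mvt_ge {f f' : ℝ → ℝ} {a b C : ℝ} (hab : a ≤ b)
    (hf : ∀ t ∈ Icc a b, HasDerivAt f (f' t) t)
    (hC : ∀ t ∈ Icc a b, C ≤ f' t) : C * (b - a) ≤ f b - f a := by
  have := mvt_le (f := fun t => -f t) (f' := fun t => -f' t) (C := -C) hab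
    (fun t ht => (hf t ht).neg) (fun t ht => by simpa using neg_le_neg (hC t ht))
  linarith

private lemma hasDerivAt_tanh (x : ℝ) :
    HasDerivAt Real.tanh (1 / Real.cosh x ^ 2) x := by
  have h : Real.tanh = fun x => Real.sinh x / Real.cosh x :=
    funext fun x => Real.tanh_eq_sinh_div_cosh x
  rw [h]
  have := (Real.hasDerivAt_sinh x).div (Real.hasDerivAt_cosh x) (Real.cosh_pos x).ne'
  refine this.congr_deriv ?_
  have := Real.cosh_sq_sub_sinh_sq x
  field_simp
  nlinarith [this]

private lemma cosh_ge_one_add_sq (x : ℝ) : 1 + x ^ 2 / 2 ≤ Real.cosh x := by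
  have h1 : Real.cosh x = Real.cosh (2 * (x / 2)) := by ring_nf
  have h2 : Real.cosh (2 * (x / 2)) = Real.cosh (x / 2) ^ 2 + Real.sinh (x / 2) ^ 2 :=
    Real.cosh_two_mul _
  have h3 : Real.cosh (x / 2) ^ 2 = 1 + Real.sinh (x / 2) ^ 2 := Real.cosh_sq' _
  have h4 : |x / 2| ≤ |Real.sinh (x / 2)| := by
    rw [Real.abs_sinh]
    have := Real.self_le_sinh_iff.2 (abs_nonneg (x / 2))
    linarith
  have h5 : (x / 2) ^ 2 ≤ Real.sinh (x / 2) ^ 2 := by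
    rw [← sq_abs (x / 2), ← sq_abs (Real.sinh (x / 2))]
    exact pow_le_pow_left₀ (abs_nonneg _) h4 2
  nlinarith

private lemma key_ineq_s18 {h Y v : ℝ} (hk2 : Real.cosh (2 * h) ≤ 2) (hv : |v| ≤ Y) :
    12 / (Real.cosh (2 * Y) + 2) ^ 2 * v ^ 4 ≤
      3 - 3 / 2 * Real.cosh h ^ 2 *
        (1 / Real.cosh (v + h) ^ 2 + 1 / Real.cosh (v - h) ^ 2) := by
  set k := Real.cosh (2 * h) with hkdef
  set u := Real.cosh (2 * v) with hudef
  set s := Real.sinh (2 * v) with hsdef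
  set σ := Real.sinh (2 * h) with hσdef
  have hk1 : 1 ≤ k := Real.one_le_cosh _
  have hu1 : 1 ≤ u := Real.one_le_cosh _
  have hs2 : s ^ 2 = u ^ 2 - 1 := Real.sinh_sq _
  have hσ2 : σ ^ 2 = k ^ 2 - 1 := Real.sinh_sq _
  have hA : Real.cosh (v + h) ^ 2 = (u * k + s * σ + 1) / 2 := by
    have e1 : Real.cosh (2 * v + 2 * h) = u * k + s * σ := Real.cosh_add _ _
    rw [show (2 : ℝ) * v + 2 * h = 2 * (v + h) by ring] at e1
    have e3 : Real.cosh (2 * (v + h)) = Real.cosh (v + h) ^ 2 + Real.sinh (v + h) ^ 2 :=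
      Real.cosh_two_mul _
    have e4 : Real.sinh (v + h) ^ 2 = Real.cosh (v + h) ^ 2 - 1 := Real.sinh_sq _
    linarith
  have hB : Real.cosh (v - h) ^ 2 = (u * k - s * σ + 1) / 2 := by
    have e1 : Real.cosh (2 * v - 2 * h) = u * k - s * σ := Real.cosh_sub _ _
    rw [show (2 : ℝ) * v - 2 * h = 2 * (v - h) by ring] at e1
    have e3 : Real.cosh (2 * (v - h)) = Real.cosh (v - h) ^ 2 + Real.sinh (v - h) ^ 2 :=
      Real.cosh_two_mul _
    have e4 : Real.sinh (v - h) ^ 2 = Real.cosh (v - h) ^ 2 - 1 := Real.sinh_sq _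
    linarith
  have hch : Real.cosh h ^ 2 = (k + 1) / 2 := by
    have e3 : Real.cosh (2 * h) = Real.cosh h ^ 2 + Real.sinh h ^ 2 := Real.cosh_two_mul _
    have e4 : Real.sinh h ^ 2 = Real.cosh h ^ 2 - 1 := Real.sinh_sq _
    rw [← hkdef] at e3
    linarith
  have hP : (0 : ℝ) < u * k + s * σ + 1 := by
    have := Real.cosh_pos (v + h); nlinarith [hA]
  have hQ : (0 : ℝ) < u * k - s * σ + 1 := by
    have := Real.cosh_pos (v - h); nlinarith [hB]
  have hPQ : (u * k + s * σ + 1) * (u * k - s * σ + 1) = (u + k) ^ 2 := by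
    linear_combination (-(σ ^ 2)) * hs2 + (-(u ^ 2 - 1)) * hσ2
  have hD : (0 : ℝ) < Real.cosh (2 * Y) + 2 := by
    have := Real.cosh_pos (2 * Y); linarith
  have hDuk : u + k ≤ Real.cosh (2 * Y) + 2 := by
    have hY0 : 0 ≤ Y := le_trans (abs_nonneg v) hv
    have : u ≤ Real.cosh (2 * Y) := by
      rw [hudef]
      apply Real.cosh_le_cosh.2
      rw [abs_of_nonneg (by linarith : (0:ℝ) ≤ 2 * Y)]
      calc |2 * v| = 2 * |v| := by rw [abs_mul]; norm_num
        _ ≤ 2 * Y := by linarith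
    linarith
  have h2v : 2 * v ^ 2 ≤ u - 1 := by
    have := cosh_ge_one_add_sq (2 * v)
    rw [← hudef] at this; nlinarith
  have hfac : 2 * v ^ 2 ≤ u + 1 + k - k ^ 2 := by
    have h2k : 0 ≤ (2 - k) * (k + 1) := mul_nonneg (by linarith) (by linarith)
    nlinarith [h2k, h2v]
  rw [hA, hB, hch, one_div_div, one_div_div]
  have e : 2 / (u * k + s * σ + 1) + 2 / (u * k - s * σ + 1)
      = (4 * (u * k) + 4) / (u + k) ^ 2 := by
    rw [div_add_div _ _ hP.ne' hQ.ne', hPQ]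
    congr 1
    ring
  rw [e]
  have hrhs : 3 - 3 / 2 * ((k + 1) / 2) * ((4 * (u * k) + 4) / (u + k) ^ 2)
      = 3 * ((u - 1) * (u + 1 + k - k ^ 2)) / (u + k) ^ 2 := by
    have huk : (0 : ℝ) < u + k := by linarith
    field_simp
    ring
  rw [hrhs, div_mul_eq_mul_div, div_le_div_iff₀ (by positivity) (by positivity)]
  have p1 : 4 * v ^ 4 ≤ (u - 1) * (u + 1 + k - k ^ 2) := by nlinarith [sq_nonneg v]
  have p2 : (u + k) ^ 2 ≤ (Real.cosh (2 * Y) + 2) ^ 2 := by nlinarith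
  nlinarith [mul_le_mul_of_nonneg_left p2 (show (0:ℝ) ≤ 12 * v ^ 4 by positivity),
    mul_le_mul_of_nonneg_left p1 (show (0:ℝ) ≤ 3 * (Real.cosh (2 * Y) + 2) ^ 2 by positivity)]

private lemma abs_le_of_sq_le {a b : ℝ} (hb : 0 ≤ b) (h : a ^ 2 ≤ b ^ 2) : |a| ≤ b := by
  have := Real.sqrt_le_sqrt h
  rwa [Real.sqrt_sq_eq_abs, Real.sqrt_sq hb] at this

private lemma windowA (c y w : ℝ → ℝ) (t r c₁ δ E0 : ℝ)
    (hr : 0 < r) (hc₁ : 0 < c₁)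
    (hy : ∀ s ∈ Icc t (t + 2), HasDerivAt y (w s) s)
    (hw : ∀ s ∈ Icc t (t + 2), HasDerivAt w (-2 * y s - c (y s) * w s) s)
    (hc0 : ∀ v, 0 ≤ c v) (hc3 : ∀ v, c v ≤ 3)
    (hEb : ∀ s ∈ Icc t (t + 2), (y s) ^ 2 ≤ E0)
    (hclow : ∀ v, r / 2 ≤ v → v ^ 2 ≤ E0 → c₁ ≤ c v)
    (hδ : 2 * δ ≤ c₁ * (r / 8) ^ 2)
    (hsmall : ∀ s ∈ Icc t (t + 2), c (y s) * (w s) ^ 2 < δ)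
    (hyt : r ≤ y t) : False := by
  have wbound : ∀ s ∈ Icc t (t + 2), r / 2 ≤ y s → |w s| ≤ r / 8 := by
    intro s hs hys
    have hcy : c₁ ≤ c (y s) := hclow _ hys (hEb s hs)
    have h1 : c₁ * (w s) ^ 2 ≤ c (y s) * (w s) ^ 2 :=
      mul_le_mul_of_nonneg_right hcy (sq_nonneg _)
    have h2 : c₁ * (w s) ^ 2 < δ := lt_of_le_of_lt h1 (hsmall s hs)
    have h3 : (w s) ^ 2 ≤ (r / 8) ^ 2 := by
      nlinarith [sq_nonneg (r / 8)]
    exact abs_le_of_sq_le (by linarith) h3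
  have claim1 : ∀ s ∈ Icc t (t + 2), r / 2 < y s := by
    by_contra hcon
    push_neg at hcon
    set B : Set ℝ := {s | s ∈ Icc t (t + 2) ∧ y s ≤ r / 2} with hBdef
    obtain ⟨sb, hsb1, hsb2⟩ := hcon
    have hBne : B.Nonempty := ⟨sb, hsb1, hsb2⟩
    have hBbdd : BddBelow B := ⟨t, fun b hb => hb.1.1⟩
    have hycont : ContinuousOn y (Icc t (t + 2)) :=
      fun s hs => (hy s hs).continuousAt.continuousWithinAt
    have hBclosed : IsClosed B := by
      have : B = Icc t (t + 2) ∩ y ⁻¹' (Iic (r / 2)) := by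
        ext s
        simp only [hBdef, Set.mem_setOf_eq, Set.mem_inter_iff, Set.mem_preimage, Set.mem_Iic]
      rw [this]
      exact ContinuousOn.preimage_isClosed_of_isClosed hycont isClosed_Icc isClosed_Iic
    set s₀ := sInf B with hs₀def
    have hs₀B : s₀ ∈ B := IsClosed.csInf_mem hBclosed hBne hBbdd
    have hs₀Icc : s₀ ∈ Icc t (t + 2) := hs₀B.1
    have hts₀ : t < s₀ := by
      rcases lt_or_eq_of_le hs₀Icc.1 with h | h
      · exact h
      · exfalso; have := hs₀B.2; rw [← h] at this; linarith
    have hIco : ∀ s ∈ Ico t s₀, r / 2 < y s := by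
      intro s hs
      have hsIcc : s ∈ Icc t (t + 2) := ⟨hs.1, le_trans hs.2.le hs₀Icc.2⟩
      by_contra hle
      push_neg at hle
      have : s₀ ≤ s := csInf_le hBbdd ⟨hsIcc, hle⟩
      linarith [hs.2]
    have hest : ∀ s' ∈ Ico t s₀, 3 * r / 4 ≤ y s' := by
      intro s' hs'
      have hs'le : s' ≤ t + 2 := le_trans hs'.2.le hs₀Icc.2
      have := mvt_ge (f := y) (f' := w) (C := -(r / 8)) hs'.1
        (fun s hs => hy s ⟨hs.1, le_trans hs.2 hs'le⟩)
        (fun s hs => by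
          have hsIco : s ∈ Ico t s₀ := ⟨hs.1, lt_of_le_of_lt hs.2 hs'.2⟩
          have := wbound s ⟨hs.1, le_trans hs.2 hs'le⟩ (hIco s hsIco).le
          have := neg_abs_le (w s)
          linarith [abs_le.1 (wbound s ⟨hs.1, le_trans hs.2 hs'le⟩ (hIco s hsIco).le)])
      have hlen : s' - t ≤ 2 := by linarith [hs'.2.le, hs₀Icc.2]
      nlinarith [this]
    have hlim : 3 * r / 4 ≤ y s₀ := by
      have hne : (𝓝[Ico t s₀] s₀).NeBot := by
        rw [← mem_closure_iff_nhdsWithin_neBot, closure_Ico hts₀.ne]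
        exact ⟨hts₀.le, le_refl _⟩
      have htend : Tendsto y (𝓝[Ico t s₀] s₀) (𝓝 (y s₀)) :=
        ((hy s₀ hs₀Icc).continuousAt.continuousWithinAt)
      exact ge_of_tendsto htend (eventually_nhdsWithin_of_forall hest)
    linarith [hs₀B.2]
  have hwb : ∀ s ∈ Icc t (t + 2), |w s| ≤ r / 8 :=
    fun s hs => wbound s hs (claim1 s hs).le
  have hw'bd : ∀ s ∈ Icc t (t + 2), -2 * y s - c (y s) * w s ≤ -(r / 2) := by
    intro s hs
    have h1 : r / 2 < y s := claim1 s hs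
    have h2 : |c (y s) * w s| ≤ 3 * (r / 8) := by
      rw [abs_mul]
      apply mul_le_mul (by rw [abs_of_nonneg (hc0 _)]; exact hc3 _) (hwb s hs)
        (abs_nonneg _) (by norm_num)
    have := abs_le.1 h2
    linarith
  have hfin := mvt_le (f := w) (f' := fun s => -2 * y s - c (y s) * w s) (C := -(r / 2))
    (by linarith : t ≤ t + 2) hw hw'bd
  have h1 := abs_le.1 (hwb t (left_mem_Icc.2 (by linarith)))
  have h2 := abs_le.1 (hwb (t + 2) (right_mem_Icc.2 (by linarith)))
  linarith

private lemma windowB (c y w : ℝ → ℝ) (t r c₁ δ E0 W0 M : ℝ)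
    (hr : 0 < r) (hc₁ : 0 < c₁) (hM : 0 < M) (hW0 : 0 < W0)
    (hy : ∀ s ∈ Icc t (t + W0 / (2 * M)), HasDerivAt y (w s) s)
    (hw : ∀ s ∈ Icc t (t + W0 / (2 * M)), HasDerivAt w (-2 * y s - c (y s) * w s) s)
    (hwder : ∀ s ∈ Icc t (t + W0 / (2 * M)), -M ≤ -2 * y s - c (y s) * w s)
    (hEb : ∀ s ∈ Icc t (t + W0 / (2 * M)), (y s) ^ 2 ≤ E0)
    (hclow : ∀ v, r / 2 ≤ v → v ^ 2 ≤ E0 → c₁ ≤ c v)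
    (hrτ : 2 * r ≤ W0 / 2 * (W0 / (2 * M)))
    (hδ : δ ≤ c₁ * (W0 / 2) ^ 2)
    (hsmall : ∀ s ∈ Icc t (t + W0 / (2 * M)), c (y s) * (w s) ^ 2 < δ)
    (hyt : -r ≤ y t) (hwt : W0 ≤ w t) : False := by
  set τ := W0 / (2 * M) with hτdef
  have hτ : 0 < τ := by positivity
  have hwlow : ∀ s ∈ Icc t (t + τ), W0 / 2 ≤ w s := by
    intro s hs
    have hmvt := mvt_ge (f := w) (f' := fun s => -2 * y s - c (y s) * w s) (C := -M)
      hs.1 (fun s' hs' => hw s' ⟨hs'.1, le_trans hs'.2 hs.2⟩)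
      (fun s' hs' => hwder s' ⟨hs'.1, le_trans hs'.2 hs.2⟩)
    have hlen : s - t ≤ τ := by linarith [hs.2]
    have : -M * (s - t) ≥ -M * τ := by nlinarith
    have hMτ : M * τ = W0 / 2 := by
      rw [hτdef]; field_simp
    nlinarith
  have hyend : r ≤ y (t + τ) := by
    have hmvt := mvt_ge (f := y) (f' := w) (C := W0 / 2) (by linarith : t ≤ t + τ)
      hy hwlow
    nlinarith
  have hend : t + τ ∈ Icc t (t + τ) := right_mem_Icc.2 (by linarith)
  have hcy : c₁ ≤ c (y (t + τ)) := hclow _ (by linarith) (hEb _ hend)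
  have hwend : W0 / 2 ≤ w (t + τ) := hwlow _ hend
  have : c₁ * (W0 / 2) ^ 2 ≤ c (y (t + τ)) * (w (t + τ)) ^ 2 := by
    apply mul_le_mul hcy _ (by positivity) (le_trans hc₁.le hcy)
    nlinarith
  linarith [hsmall _ hend]

private lemma abs_mul_le {a b A B : ℝ} (h1 : |a| ≤ A) (h2 : |b| ≤ B) : |a * b| ≤ A * B := by
  rw [abs_mul]
  exact mul_le_mul h1 h2 (abs_nonneg _) (le_trans (abs_nonneg _) h1)

private lemma lienard_tendsto (c c' : ℝ → ℝ) (K : ℝ) (hK : 0 < K)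
    (hcder : ∀ v, HasDerivAt c (c' v) v)
    (hc'bd : ∀ v, |c' v| ≤ 9)
    (hc0 : ∀ v, 0 ≤ c v) (hc3 : ∀ v, c v ≤ 3)
    (y w : ℝ → ℝ)
    (hy : ∀ t, 0 ≤ t → HasDerivAt y (w t) t)
    (hw : ∀ t, 0 ≤ t → HasDerivAt w (-2 * y t - c (y t) * w t) t)
    (hclow : ∀ v, v ^ 2 ≤ (w 0) ^ 2 / 2 + (y 0) ^ 2 → K * v ^ 4 ≤ c v) :
    Tendsto (fun t => (w t) ^ 2 / 2 + (y t) ^ 2) atTop (𝓝 0) := by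
  set E : ℝ → ℝ := fun t => (w t) ^ 2 / 2 + (y t) ^ 2 with hEdef
  have hE0eq : ∀ t, E t = (w t) ^ 2 / 2 + (y t) ^ 2 := fun t => by rw [hEdef]
  have hEder : ∀ t, 0 ≤ t → HasDerivAt E (-(c (y t) * (w t) ^ 2)) t := by
    intro t ht
    have hw2 : HasDerivAt (fun u => (w u) ^ 2)
        ((2 : ℕ) * (w t) ^ 1 * (-2 * y t - c (y t) * w t)) t := (hw t ht).pow 2
    have hy2 : HasDerivAt (fun u => (y u) ^ 2) ((2 : ℕ) * (y t) ^ 1 * w t) t := (hy t ht).pow 2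
    have h2 := (hw2.div_const 2).add hy2
    rw [hEdef]
    refine h2.congr_deriv ?_
    push_cast
    ring
  clear_value E
  have hE0 : ∀ t, 0 ≤ E t := fun t => by rw [hE0eq]; positivity
  have hEmono : ∀ a b, 0 ≤ a → a ≤ b → E b ≤ E a := by
    intro a b ha hab
    have := mvt_le (f := E) (f' := fun t => -(c (y t) * (w t) ^ 2)) (C := 0) hab
      (fun s hs => hEder s (le_trans ha hs.1))
      (fun s hs => by
        show -(c (y s) * (w s) ^ 2) ≤ 0
        nlinarith [hc0 (y s), sq_nonneg (w s)])
    linarith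
  suffices hsuf : ∀ ε, 0 < ε → ∃ t, 0 ≤ t ∧ E t < ε by
    rw [Metric.tendsto_atTop]
    intro ε hε
    obtain ⟨t₀, ht₀, hEt₀⟩ := hsuf ε hε
    refine ⟨t₀, fun n hn => ?_⟩
    have h1 := hEmono t₀ n ht₀ hn
    rw [Real.dist_eq, sub_zero, abs_of_nonneg (hE0 n)]
    linarith
  intro ε hε
  by_contra hcon
  push_neg at hcon
  have hLB : ∀ t, 0 ≤ t → ε ≤ E t := fun t ht => hcon t ht
  have hE00 : 0 < E 0 := lt_of_lt_of_le hε (hLB 0 le_rfl)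
  have hyb : ∀ t, 0 ≤ t → (y t) ^ 2 ≤ E 0 := by
    intro t ht
    have h1 : E t ≤ E 0 := hEmono 0 t le_rfl ht
    rw [hE0eq t, hE0eq 0] at h1
    rw [hE0eq 0]
    nlinarith [sq_nonneg (w t)]
  have hwb : ∀ t, 0 ≤ t → (w t) ^ 2 ≤ 2 * E 0 := by
    intro t ht
    have h1 : E t ≤ E 0 := hEmono 0 t le_rfl ht
    rw [hE0eq t, hE0eq 0] at h1
    rw [hE0eq 0]
    nlinarith [sq_nonneg (y t)]
  set Yb := Real.sqrt (E 0) with hYbdef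
  set Wb := Real.sqrt (2 * E 0) with hWbdef
  have hYbpos : 0 < Yb := Real.sqrt_pos.2 hE00
  have hWbpos : 0 < Wb := Real.sqrt_pos.2 (by linarith)
  have hYb : ∀ t, 0 ≤ t → |y t| ≤ Yb := by
    intro t ht
    rw [hYbdef, ← Real.sqrt_sq_eq_abs]
    exact Real.sqrt_le_sqrt (hyb t ht)
  have hWb : ∀ t, 0 ≤ t → |w t| ≤ Wb := by
    intro t ht
    rw [hWbdef, ← Real.sqrt_sq_eq_abs]
    exact Real.sqrt_le_sqrt (hwb t ht)
  set M := 2 * Yb + 3 * Wb with hMdef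
  have hM : 0 < M := by positivity
  have hw'bd : ∀ t, 0 ≤ t → |(-2 * y t - c (y t) * w t)| ≤ M := by
    intro t ht
    have h1 := abs_le.1 (hYb t ht)
    have h2 := abs_le.1 (hWb t ht)
    have h3 : |c (y t) * w t| ≤ 3 * Wb := abs_mul_le
      (by rw [abs_of_nonneg (hc0 _)]; exact hc3 _) (hWb t ht)
    have h4 := abs_le.1 h3
    rw [abs_le]
    constructor <;> [skip; skip] <;> simp only [hMdef] <;> nlinarith
  set W0 := Real.sqrt ε with hW0def
  have hW0 : 0 < W0 := Real.sqrt_pos.2 hε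
  have hW0sq : W0 ^ 2 = ε := Real.sq_sqrt hε.le
  set r := min (Real.sqrt (ε / 2)) (ε / (8 * M)) with hrdef
  have hrpos : 0 < r := lt_min (Real.sqrt_pos.2 (by linarith)) (by positivity)
  have hr2 : r ^ 2 ≤ ε / 2 := by
    have h1 : r ≤ Real.sqrt (ε / 2) := min_le_left _ _
    have := Real.sq_sqrt (show (0:ℝ) ≤ ε / 2 by linarith)
    nlinarith [hrpos]
  have hrM : r ≤ ε / (8 * M) := min_le_right _ _
  have hrτ : 2 * r ≤ W0 / 2 * (W0 / (2 * M)) := by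
    calc 2 * r ≤ 2 * (ε / (8 * M)) := by linarith
      _ = ε / (4 * M) := by
        field_simp
        ring
      _ = W0 ^ 2 / (4 * M) := by rw [hW0sq]
      _ = W0 / 2 * (W0 / (2 * M)) := by
        field_simp
        ring
  set c₁ := K * (r / 2) ^ 4 with hc₁def
  have hc₁pos : 0 < c₁ := by positivity
  have hclow' : ∀ v, r / 2 ≤ |v| → v ^ 2 ≤ E 0 → c₁ ≤ c v := by
    intro v h1 h2
    have h3 : (r / 2) ^ 2 ≤ v ^ 2 := by
      rw [← sq_abs v]
      exact pow_le_pow_left₀ (by positivity) h1 2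
    have h4 : (r / 2) ^ 4 ≤ v ^ 4 := by nlinarith
    have h5 := hclow v (by rw [hE0eq 0] at h2; exact h2)
    calc c₁ = K * (r / 2) ^ 4 := rfl
      _ ≤ K * v ^ 4 := by nlinarith
      _ ≤ c v := h5
  set δ := min (c₁ * (r / 8) ^ 2 / 2) (c₁ * (W0 / 2) ^ 2) with hδdef
  have hδpos : 0 < δ := lt_min (by positivity) (by positivity)
  set Λ := 9 * Wb ^ 3 + 6 * Wb * M + 1 with hΛdef
  have hΛpos : 0 < Λ := by positivity
  set η := δ / (2 * Λ) with hηdef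
  have hηpos : 0 < η := by positivity
  set τ := W0 / (2 * M) with hτdef
  have hτpos : 0 < τ := by positivity
  -- key dissipation claim
  have dissip : ∀ t, 0 ≤ t → ∃ s, s ∈ Icc t (t + (2 + τ)) ∧ δ ≤ c (y s) * (w s) ^ 2 := by
    intro t ht
    by_contra hcon2
    push_neg at hcon2
    have hsm : ∀ s ∈ Icc t (t + (2 + τ)), c (y s) * (w s) ^ 2 < δ := by
      intro s hs
      exact hcon2 s hs
    have hsubA : Icc t (t + 2) ⊆ Icc t (t + (2 + τ)) :=
      Icc_subset_Icc le_rfl (by linarith)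
    have hsubB : Icc t (t + τ) ⊆ Icc t (t + (2 + τ)) :=
      Icc_subset_Icc le_rfl (by linarith)
    have hpos : ∀ s, s ∈ Icc t (t + (2 + τ)) → 0 ≤ s := fun s hs => le_trans ht hs.1
    have hclowA : ∀ v, r / 2 ≤ v → v ^ 2 ≤ E 0 → c₁ ≤ c v :=
      fun v h1 h2 => hclow' v (le_trans h1 (le_abs_self v)) h2
    have hclowAneg : ∀ v, r / 2 ≤ v → v ^ 2 ≤ E 0 → c₁ ≤ c (-v) := by
      intro v h1 h2
      apply hclow' (-v) _ (by nlinarith)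
      rw [abs_neg]
      exact le_trans h1 (le_abs_self v)
    have hδA : 2 * δ ≤ c₁ * (r / 8) ^ 2 := by
      have := min_le_left (c₁ * (r / 8) ^ 2 / 2) (c₁ * (W0 / 2) ^ 2)
      rw [← hδdef] at this
      linarith
    have hδB : δ ≤ c₁ * (W0 / 2) ^ 2 := by
      have := min_le_right (c₁ * (r / 8) ^ 2 / 2) (c₁ * (W0 / 2) ^ 2)
      rw [← hδdef] at this
      linarith
    rcases le_or_gt r (y t) with hcase | hcase
    · exact windowA c y w t r c₁ δ (E 0) hrpos hc₁pos
        (fun s hs => hy s (hpos s (hsubA hs)))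
        (fun s hs => hw s (hpos s (hsubA hs)))
        hc0 hc3
        (fun s hs => hyb s (hpos s (hsubA hs)))
        hclowA hδA
        (fun s hs => hsm s (hsubA hs)) hcase
    rcases le_or_gt (y t) (-r) with hcase2 | hcase2
    · apply windowA (fun v => c (-v)) (fun s => -y s) (fun s => -w s) t r c₁ δ (E 0)
        hrpos hc₁pos
        (fun s hs => (hy s (hpos s (hsubA hs))).neg)
        (fun s hs => by
          have := (hw s (hpos s (hsubA hs))).neg
          refine this.congr_deriv ?_
          simp only [neg_neg]
          ring)
        (fun v => hc0 (-v)) (fun v => hc3 (-v))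
        (fun s hs => by simpa using hyb s (hpos s (hsubA hs)))
        hclowAneg hδA
        (fun s hs => by simpa using hsm s (hsubA hs))
        (by show r ≤ -(y t); linarith)
    · -- |y t| < r, hence |w t| ≥ W0
      have hyt2 : (y t) ^ 2 ≤ r ^ 2 := by nlinarith
      have hεE := hLB t ht
      have hwt2 : ε ≤ (w t) ^ 2 := by
        rw [hE0eq t] at hεE
        nlinarith
      have habs : W0 ≤ |w t| := by
        rw [← Real.sqrt_sq_eq_abs, hW0def]
        exact Real.sqrt_le_sqrt hwt2
      rcases le_or_gt W0 (w t) with hsign | hsign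
      · exact windowB c y w t r c₁ δ (E 0) W0 M hrpos hc₁pos hM hW0
          (fun s hs => hy s (hpos s (hsubB hs)))
          (fun s hs => hw s (hpos s (hsubB hs)))
          (fun s hs => (abs_le.1 (hw'bd s (hpos s (hsubB hs)))).1)
          (fun s hs => hyb s (hpos s (hsubB hs)))
          hclowA hrτ hδB
          (fun s hs => hsm s (hsubB hs))
          (by linarith) hsign
      · have hwneg : W0 ≤ -(w t) := by
          rcases abs_cases (w t) with ⟨he, _⟩ | ⟨he, _⟩
          · rw [he] at habs; linarith
          · rw [he] at habs; linarith
        apply windowB (fun v => c (-v)) (fun s => -y s) (fun s => -w s) t r c₁ δ (E 0) W0 M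
          hrpos hc₁pos hM hW0
          (fun s hs => (hy s (hpos s (hsubB hs))).neg)
          (fun s hs => by
            have := (hw s (hpos s (hsubB hs))).neg
            refine this.congr_deriv ?_
            simp only [neg_neg]
            ring)
          (fun s hs => by
            have := (abs_le.1 (hw'bd s (hpos s (hsubB hs)))).2
            simp only [neg_neg]
            linarith)
          (fun s hs => by simpa using hyb s (hpos s (hsubB hs)))
          hclowAneg hrτ hδB
          (fun s hs => by simpa using hsm s (hsubB hs))
          (by show -r ≤ -(y t); linarith) (by show W0 ≤ -(w t); linarith)
  -- energy drop per period
  have hΛbd : ∀ s, 0 ≤ s →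
      |c' (y s) * w s * (w s) ^ 2 + c (y s) * ((2:ℕ) * (w s) ^ 1 * (-2 * y s - c (y s) * w s))| ≤ Λ := by
    intro s hs
    have e1 : |c' (y s) * w s * (w s) ^ 2| ≤ 9 * Wb * Wb ^ 2 := by
      apply abs_mul_le (abs_mul_le (hc'bd _) (hWb s hs))
      rw [abs_pow]
      exact pow_le_pow_left₀ (abs_nonneg _) (hWb s hs) 2
    have e2 : |c (y s) * ((2:ℕ) * (w s) ^ 1 * (-2 * y s - c (y s) * w s))| ≤ 3 * (2 * Wb * M) := by
      apply abs_mul_le (by rw [abs_of_nonneg (hc0 _)]; exact hc3 _)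
      push_cast
      apply abs_mul_le _ (hw'bd s hs)
      rw [pow_one, abs_mul, abs_two]
      exact mul_le_mul_of_nonneg_left (hWb s hs) (by norm_num)
    calc |c' (y s) * w s * (w s) ^ 2 + c (y s) * ((2:ℕ) * (w s) ^ 1 * (-2 * y s - c (y s) * w s))|
        ≤ |c' (y s) * w s * (w s) ^ 2| +
          |c (y s) * ((2:ℕ) * (w s) ^ 1 * (-2 * y s - c (y s) * w s))| := abs_add_le _ _
      _ ≤ 9 * Wb * Wb ^ 2 + 3 * (2 * Wb * M) := by linarith
      _ ≤ Λ := by rw [hΛdef]; nlinarith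
  have hhder : ∀ s, 0 ≤ s → HasDerivAt (fun u => c (y u) * (w u) ^ 2)
      (c' (y s) * w s * (w s) ^ 2 + c (y s) * ((2:ℕ) * (w s) ^ 1 * (-2 * y s - c (y s) * w s))) s := by
    intro s hs
    exact ((hcder (y s)).comp s (hy s hs)).mul ((hw s hs).pow 2)
  have drop : ∀ t, 0 ≤ t → E (t + (2 + τ + η)) ≤ E t - δ / 2 * η := by
    intro t ht
    obtain ⟨s, hsIcc, hsδ⟩ := dissip t ht
    have hs0 : 0 ≤ s := le_trans ht hsIcc.1
    have hhlow : ∀ s', s' ∈ Icc s (s + η) → δ / 2 ≤ c (y s') * (w s') ^ 2 := by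
      intro s' hs'
      have hmvt := mvt_ge (f := fun u => c (y u) * (w u) ^ 2)
        (f' := fun u => c' (y u) * w u * (w u) ^ 2 +
          c (y u) * ((2:ℕ) * (w u) ^ 1 * (-2 * y u - c (y u) * w u)))
        (C := -Λ) hs'.1
        (fun u hu => hhder u (le_trans hs0 hu.1))
        (fun u hu => (abs_le.1 (hΛbd u (le_trans hs0 hu.1))).1)
      have hlen : s' - s ≤ η := by linarith [hs'.2]
      have hΛη : Λ * η = δ / 2 := by
        rw [hηdef]
        field_simp
      have hmvt' : -Λ * (s' - s) ≤ c (y s') * (w s') ^ 2 - c (y s) * (w s) ^ 2 := hmvt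
      nlinarith [hΛpos, hs'.1]
    have hEdrop : E (s + η) - E s ≤ -(δ / 2) * η := by
      have := mvt_le (f := E) (f' := fun u => -(c (y u) * (w u) ^ 2)) (C := -(δ / 2))
        (by linarith : s ≤ s + η)
        (fun u hu => hEder u (le_trans hs0 hu.1))
        (fun u hu => by have := hhlow u hu; linarith)
      linarith [this]
    have hc1 : E (t + (2 + τ + η)) ≤ E (s + η) := by
      apply hEmono (s + η) (t + (2 + τ + η)) (by linarith)
      have := hsIcc.2
      linarith
    have hc2 : E s ≤ E t := hEmono t s ht hsIcc.1
    have he : -(δ / 2) * η = -(δ / 2 * η) := by ring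
    rw [he] at hEdrop
    linarith
  -- iterate
  set P := 2 + τ + η with hPdef
  have hPpos : 0 < P := by positivity
  have hiter : ∀ n : ℕ, E (n * P) ≤ E 0 - n * (δ / 2 * η) := by
    intro n
    induction n with
    | zero => simp
    | succ n ih =>
      have hn0 : (0:ℝ) ≤ n * P := by positivity
      have := drop (n * P) hn0
      have heq : ((n : ℝ) + 1) * P = n * P + (2 + τ + η) := by rw [hPdef]; ring
      push_cast
      rw [heq]
      push_cast at ih
      nlinarith
  obtain ⟨n, hn⟩ := exists_nat_gt (E 0 / (δ / 2 * η))
  have h1 : E 0 < n * (δ / 2 * η) := by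
    rw [div_lt_iff₀ (by positivity)] at hn
    linarith
  have h2 := hiter n
  have h3 := hE0 (n * P)
  linarith

private lemma sech_sq_deriv (u : ℝ) :
    HasDerivAt (fun u => 1 / Real.cosh u ^ 2) (-(2 * Real.sinh u) / Real.cosh u ^ 3) u := by
  have h1 : HasDerivAt (fun u => Real.cosh u ^ 2)
      ((2 : ℕ) * Real.cosh u ^ 1 * Real.sinh u) u := (Real.hasDerivAt_cosh u).pow 2
  have hne : Real.cosh u ^ 2 ≠ 0 := by positivity
  have h2 := h1.inv hne
  have h3 : (fun u => 1 / Real.cosh u ^ 2) = fun u => (Real.cosh u ^ 2)⁻¹ := by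
    funext v; rw [one_div]
  rw [h3]
  refine h2.congr_deriv ?_
  have hc : Real.cosh u ≠ 0 := (Real.cosh_pos u).ne'
  field_simp
  ring

private lemma sech_sq_deriv_bd (u : ℝ) : |(-(2 * Real.sinh u) / Real.cosh u ^ 3)| ≤ 2 := by
  have hc := Real.cosh_pos u
  have h1 : |Real.sinh u| ≤ Real.cosh u := by
    have h2 : Real.sinh u ^ 2 = Real.cosh u ^ 2 - 1 := Real.sinh_sq u
    exact abs_le_of_sq_le hc.le (by nlinarith)
  have h2 : 1 ≤ Real.cosh u := Real.one_le_cosh u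
  rw [abs_div, abs_neg, abs_mul, abs_two, abs_of_pos (by positivity : (0:ℝ) < Real.cosh u ^ 3)]
  rw [div_le_iff₀ (by positivity)]
  have h3 : Real.cosh u ≤ Real.cosh u ^ 3 := by
    nlinarith [mul_nonneg (mul_nonneg hc.le (sub_nonneg.2 h2))
      (by linarith : (0:ℝ) ≤ Real.cosh u + 1)]
  linarith

/-- For `0 ≤ h ≤ (1/2)ln(2+√3)` and `0 < β ≤ (3/2)cosh²h`, the origin attracts
all trajectories of the planar system `(x', y') = V(x, y)` with
`V(x,y) = (−2x + tanh(y+h) + tanh(y−h), −y + β(−2x + tanh(y+h) + tanh(y−h)))`. -/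
theorem origin_global_attractor (β h : ℝ) (hβ : 0 < β) (hh : 0 ≤ h)
    (hh' : h ≤ 1 / 2 * Real.log (2 + Real.sqrt 3))
    (hβ' : β ≤ 3 / 2 * Real.cosh h ^ 2)
    (V : ℝ × ℝ → ℝ × ℝ)
    (hV : ∀ x y : ℝ, V (x, y) =
      (-2 * x + Real.tanh (y + h) + Real.tanh (y - h),
       -y + β * (-2 * x + Real.tanh (y + h) + Real.tanh (y - h)))) :
    ∀ f : ℝ → ℝ × ℝ,
      (∀ t : ℝ, 0 ≤ t → HasDerivAt f (V (f t)) t) →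
      Filter.Tendsto f Filter.atTop (nhds ((0 : ℝ), (0 : ℝ))) := by
  intro f hf
  -- the cosh(2h) ≤ 2 bound
  have hsq3 : Real.sqrt 3 ^ 2 = 3 := Real.sq_sqrt (by norm_num)
  have hx23 : (0:ℝ) < 2 + Real.sqrt 3 := by positivity
  have hk : Real.cosh (2 * h) ≤ 2 := by
    have hln0 : 0 ≤ Real.log (2 + Real.sqrt 3) :=
      Real.log_nonneg (by nlinarith [Real.sqrt_nonneg 3])
    have h2h : |2 * h| ≤ |Real.log (2 + Real.sqrt 3)| := by
      rw [abs_of_nonneg (by linarith), abs_of_nonneg hln0]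
      linarith
    have hmono := Real.cosh_le_cosh.2 h2h
    have hval : Real.cosh (Real.log (2 + Real.sqrt 3)) = 2 := by
      rw [Real.cosh_log hx23]
      have hinv : (2 + Real.sqrt 3)⁻¹ = 2 - Real.sqrt 3 :=
        inv_eq_of_mul_eq_one_right (by nlinarith)
      rw [hinv]
      ring
    rw [hval] at hmono
    exact hmono
  have hch2 : Real.cosh h ^ 2 = (Real.cosh (2 * h) + 1) / 2 := by
    have e3 : Real.cosh (2 * h) = Real.cosh h ^ 2 + Real.sinh h ^ 2 := Real.cosh_two_mul _
    have e4 : Real.sinh h ^ 2 = Real.cosh h ^ 2 - 1 := Real.sinh_sq _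
    linarith
  have hβ4 : β ≤ 9 / 4 := by nlinarith
  -- coordinates
  set x : ℝ → ℝ := fun t => (f t).1 with hxdef
  set y : ℝ → ℝ := fun t => (f t).2 with hydef
  set w : ℝ → ℝ := fun t =>
    -(y t) + β * (-2 * x t + Real.tanh (y t + h) + Real.tanh (y t - h)) with hwdef
  have hft : ∀ t, f t = (x t, y t) := fun t => rfl
  have hVft : ∀ t, V (f t) =
      (-2 * x t + Real.tanh (y t + h) + Real.tanh (y t - h), w t) := by
    intro t
    rw [hft t, hV (x t) (y t)]
  have hx' : ∀ t, 0 ≤ t → HasDerivAt x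
      (-2 * x t + Real.tanh (y t + h) + Real.tanh (y t - h)) t := by
    intro t ht
    have h1 : HasDerivAt (fun t => (f t).1) ((V (f t)).1) t :=
      (ContinuousLinearMap.fst ℝ ℝ ℝ).hasFDerivAt.comp_hasDerivAt t (hf t ht)
    rw [hVft t] at h1
    exact h1
  have hy' : ∀ t, 0 ≤ t → HasDerivAt y (w t) t := by
    intro t ht
    have h1 : HasDerivAt (fun t => (f t).2) ((V (f t)).2) t :=
      (ContinuousLinearMap.snd ℝ ℝ ℝ).hasFDerivAt.comp_hasDerivAt t (hf t ht)
    rw [hVft t] at h1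
    exact h1
  -- the damping function
  set c : ℝ → ℝ := fun v =>
    3 - β * (1 / Real.cosh (v + h) ^ 2 + 1 / Real.cosh (v - h) ^ 2) with hcdef
  set c' : ℝ → ℝ := fun v =>
    -(β * (-(2 * Real.sinh (v + h)) / Real.cosh (v + h) ^ 3 +
      -(2 * Real.sinh (v - h)) / Real.cosh (v - h) ^ 3)) with hc'def
  have hFder : ∀ v, HasDerivAt
      (fun v => 1 / Real.cosh (v + h) ^ 2 + 1 / Real.cosh (v - h) ^ 2)
      (-(2 * Real.sinh (v + h)) / Real.cosh (v + h) ^ 3 +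
        -(2 * Real.sinh (v - h)) / Real.cosh (v - h) ^ 3) v := by
    intro v
    have h1 := (sech_sq_deriv (v + h)).comp v ((hasDerivAt_id v).add_const h)
    have h2 := (sech_sq_deriv (v - h)).comp v ((hasDerivAt_id v).sub_const h)
    simp only [Function.comp, mul_one] at h1 h2
    exact h1.add h2
  have hcder : ∀ v, HasDerivAt c (c' v) v := by
    intro v
    rw [hcdef, hc'def]
    exact ((hFder v).const_mul β).const_sub 3
  have hc'bd : ∀ v, |c' v| ≤ 9 := by
    intro v
    rw [hc'def]
    have b1 := sech_sq_deriv_bd (v + h)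
    have b2 := sech_sq_deriv_bd (v - h)
    have htri := abs_add_le (-(2 * Real.sinh (v + h)) / Real.cosh (v + h) ^ 3)
      (-(2 * Real.sinh (v - h)) / Real.cosh (v - h) ^ 3)
    rw [abs_neg, abs_mul, abs_of_pos hβ]
    nlinarith [abs_nonneg (-(2 * Real.sinh (v + h)) / Real.cosh (v + h) ^ 3 +
      -(2 * Real.sinh (v - h)) / Real.cosh (v - h) ^ 3)]
  have hFpos : ∀ v : ℝ, 0 ≤ 1 / Real.cosh (v + h) ^ 2 + 1 / Real.cosh (v - h) ^ 2 := by
    intro v; positivity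
  have hgap : ∀ v : ℝ, ∀ Y : ℝ, |v| ≤ Y →
      12 / (Real.cosh (2 * Y) + 2) ^ 2 * v ^ 4 ≤ c v := by
    intro v Y hv
    have hki := key_ineq_s18 hk hv
    have hmul : β * (1 / Real.cosh (v + h) ^ 2 + 1 / Real.cosh (v - h) ^ 2) ≤
        3 / 2 * Real.cosh h ^ 2 * (1 / Real.cosh (v + h) ^ 2 + 1 / Real.cosh (v - h) ^ 2) :=
      mul_le_mul_of_nonneg_right hβ' (hFpos v)
    show 12 / (Real.cosh (2 * Y) + 2) ^ 2 * v ^ 4 ≤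
      3 - β * (1 / Real.cosh (v + h) ^ 2 + 1 / Real.cosh (v - h) ^ 2)
    linarith
  have hc3 : ∀ v, c v ≤ 3 := by
    intro v
    show 3 - β * (1 / Real.cosh (v + h) ^ 2 + 1 / Real.cosh (v - h) ^ 2) ≤ 3
    nlinarith [hFpos v, hβ]
  -- the w-equation
  have hw' : ∀ t, 0 ≤ t → HasDerivAt w (-2 * y t - c (y t) * w t) t := by
    intro t ht
    have hT1 : HasDerivAt (fun t => Real.tanh (y t + h))
        (1 / Real.cosh (y t + h) ^ 2 * w t) t := by
      have := (hasDerivAt_tanh (y t + h)).comp t ((hy' t ht).add_const h)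
      simpa [Function.comp_def] using this
    have hT2 : HasDerivAt (fun t => Real.tanh (y t - h))
        (1 / Real.cosh (y t - h) ^ 2 * w t) t := by
      have := (hasDerivAt_tanh (y t - h)).comp t ((hy' t ht).sub_const h)
      simpa [Function.comp_def] using this
    have hu : HasDerivAt (fun t => -2 * x t + Real.tanh (y t + h) + Real.tanh (y t - h))
        (-2 * (-2 * x t + Real.tanh (y t + h) + Real.tanh (y t - h)) +
          1 / Real.cosh (y t + h) ^ 2 * w t + 1 / Real.cosh (y t - h) ^ 2 * w t) t :=
      (((hx' t ht).const_mul (-2)).add hT1).add hT2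
    have htot := ((hy' t ht).neg).add (hu.const_mul β)
    rw [hwdef]
    refine htot.congr_deriv ?_
    simp only [hwdef, hcdef]
    ring
  clear_value c c'
  have hc0 : ∀ v, 0 ≤ c v := by
    intro v
    have := hgap v |v| le_rfl
    have h0 : 0 ≤ 12 / (Real.cosh (2 * |v|) + 2) ^ 2 * v ^ 4 := by positivity
    linarith
  -- apply the main lemma
  set E0 := (w 0) ^ 2 / 2 + (y 0) ^ 2 with hE0def
  have hE0nn : 0 ≤ E0 := by positivity
  set K := 12 / (Real.cosh (2 * Real.sqrt E0) + 2) ^ 2 with hKdef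
  have hK : 0 < K := by
    have := Real.cosh_pos (2 * Real.sqrt E0)
    rw [hKdef]
    positivity
  have hclow : ∀ v, v ^ 2 ≤ (w 0) ^ 2 / 2 + (y 0) ^ 2 → K * v ^ 4 ≤ c v := by
    intro v hv
    have habs : |v| ≤ Real.sqrt E0 := by
      rw [← Real.sqrt_sq_eq_abs]
      exact Real.sqrt_le_sqrt (by rw [hE0def]; exact hv)
    have := hgap v (Real.sqrt E0) habs
    rw [hKdef]
    linarith
  have hE := lienard_tendsto c c' K hK hcder hc'bd hc0 hc3 y w hy' hw' hclow
  -- extract limits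
  have hytend : Tendsto y atTop (𝓝 0) := by
    have hsq : Tendsto (fun t => Real.sqrt ((w t) ^ 2 / 2 + (y t) ^ 2)) atTop (𝓝 0) := by
      have := hE.sqrt
      rwa [Real.sqrt_zero] at this
    have hsqn : Tendsto (fun t => -Real.sqrt ((w t) ^ 2 / 2 + (y t) ^ 2)) atTop (𝓝 0) := by
      have := hsq.neg
      rwa [neg_zero] at this
    apply tendsto_of_tendsto_of_tendsto_of_le_of_le hsqn hsq
    · intro t
      have h1 : |y t| ≤ Real.sqrt ((w t) ^ 2 / 2 + (y t) ^ 2) := by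
        rw [← Real.sqrt_sq_eq_abs]
        exact Real.sqrt_le_sqrt (by nlinarith [sq_nonneg (w t)])
      linarith [(abs_le.1 h1).1]
    · intro t
      have h1 : |y t| ≤ Real.sqrt ((w t) ^ 2 / 2 + (y t) ^ 2) := by
        rw [← Real.sqrt_sq_eq_abs]
        exact Real.sqrt_le_sqrt (by nlinarith [sq_nonneg (w t)])
      linarith [(abs_le.1 h1).2]
  have hwtend : Tendsto w atTop (𝓝 0) := by
    have h2E : Tendsto (fun t => 2 * ((w t) ^ 2 / 2 + (y t) ^ 2)) atTop (𝓝 0) := by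
      have := hE.const_mul 2
      simpa using this
    have hsq : Tendsto (fun t => Real.sqrt (2 * ((w t) ^ 2 / 2 + (y t) ^ 2))) atTop (𝓝 0) := by
      have := h2E.sqrt
      rwa [Real.sqrt_zero] at this
    have hsqn : Tendsto (fun t => -Real.sqrt (2 * ((w t) ^ 2 / 2 + (y t) ^ 2))) atTop (𝓝 0) := by
      have := hsq.neg
      rwa [neg_zero] at this
    apply tendsto_of_tendsto_of_tendsto_of_le_of_le hsqn hsq
    · intro t
      have h1 : |w t| ≤ Real.sqrt (2 * ((w t) ^ 2 / 2 + (y t) ^ 2)) := by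
        rw [← Real.sqrt_sq_eq_abs]
        exact Real.sqrt_le_sqrt (by nlinarith [sq_nonneg (y t)])
      linarith [(abs_le.1 h1).1]
    · intro t
      have h1 : |w t| ≤ Real.sqrt (2 * ((w t) ^ 2 / 2 + (y t) ^ 2)) := by
        rw [← Real.sqrt_sq_eq_abs]
        exact Real.sqrt_le_sqrt (by nlinarith [sq_nonneg (y t)])
      linarith [(abs_le.1 h1).2]
  have htanh : Continuous Real.tanh := by
    rw [show Real.tanh = fun x => Real.sinh x / Real.cosh x from
      funext fun x => Real.tanh_eq_sinh_div_cosh x]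
    exact Real.continuous_sinh.div Real.continuous_cosh fun x => (Real.cosh_pos x).ne'
  have hGy : Tendsto (fun t => Real.tanh (y t + h) + Real.tanh (y t - h)) atTop (𝓝 0) := by
    have h1 : Tendsto (fun t => Real.tanh (y t + h)) atTop (𝓝 (Real.tanh (0 + h))) :=
      (htanh.continuousAt.tendsto).comp (hytend.add_const h)
    have h2 : Tendsto (fun t => Real.tanh (y t - h)) atTop (𝓝 (Real.tanh (0 - h))) :=
      (htanh.continuousAt.tendsto).comp (hytend.sub_const h)
    have := h1.add h2
    simp only [zero_add, zero_sub, Real.tanh_neg, add_neg_cancel] at this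
    exact this
  have hxtend : Tendsto x atTop (𝓝 0) := by
    have hxeq : ∀ t, x t =
        (β * (Real.tanh (y t + h) + Real.tanh (y t - h)) - w t - y t) / (2 * β) := by
      intro t
      have hwt : w t = -(y t) + β * (-2 * x t + Real.tanh (y t + h) + Real.tanh (y t - h)) := by
        rw [hwdef]
      rw [eq_div_iff (by positivity : (2 : ℝ) * β ≠ 0)]
      linear_combination hwt
    have hxfun : x = fun t =>
        (β * (Real.tanh (y t + h) + Real.tanh (y t - h)) - w t - y t) / (2 * β) :=
      funext hxeq
    rw [hxfun]
    have hnum : Tendsto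
        (fun t => β * (Real.tanh (y t + h) + Real.tanh (y t - h)) - w t - y t)
        atTop (𝓝 (β * 0 - 0 - 0)) :=
      ((hGy.const_mul β).sub hwtend).sub hytend
    have := hnum.div_const (2 * β)
    simpa using this
  have hfeq : f = fun t => (x t, y t) := funext fun t => hft t
  rw [hfeq]
  have := hxtend.prodMk_nhds hytend
  simpa using this
end
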